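/- For every positive integer n and every real α with 0 ≤ α ≤ 1, e^{-α - α(1-α)/(4n) - 1/(16n)} ≤ (n/(n+α))^{n+1/2} ≤ e^{-α - α(1-α)/(4n)}. -/

import Mathlib

open Real Set

private lemma log_lb_aux {x : ℝ} (hx : 0 ≤ x) : 2*x/(2+x) ≤ Real.log (1+x) := by
  set f : ℝ → ℝ := fun t => Real.log (1+t) - 2*t/(2+t) with hf
  have hder : ∀ y : ℝ, 0 ≤ y → HasDerivAt f (y^2/((1+y)*(2+y)^2)) y := by
    intro y hy
    have h1y : (1:ℝ) + y ≠ 0 := by linarith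
    have h2y : (2:ℝ) + y ≠ 0 := by linarith
    have h1 : HasDerivAt (fun t : ℝ => Real.log (1+t)) (1/(1+y)) y := by
      have := (Real.hasDerivAt_log h1y).comp y ((hasDerivAt_id y).const_add 1)
      simpa [one_div, Function.comp_def] using this
    have h2 : HasDerivAt (fun t : ℝ => 2*t/(2+t)) (4/(2+y)^2) y := by
      have := (((hasDerivAt_id y).const_mul 2).div ((hasDerivAt_id y).const_add 2) h2y)
      refine this.congr_deriv ?_
      simp only [id_eq]
      field_simp
      ring
    have := h1.sub h2
    refine this.congr_deriv ?_
    field_simp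
    ring
  have hmono : MonotoneOn f (Set.Ici 0) := by
    apply monotoneOn_of_deriv_nonneg (convex_Ici 0)
    · exact fun y hy => ((hder y hy).continuousAt).continuousWithinAt
    · intro y hy
      rw [interior_Ici] at hy
      exact (hder y (le_of_lt hy)).differentiableAt.differentiableWithinAt
    · intro y hy
      rw [interior_Ici] at hy
      rw [(hder y (le_of_lt hy)).deriv]
      have hy' : (0:ℝ) < y := hy
      have h1y : (0:ℝ) < 1+y := by linarith
      have h2y : (0:ℝ) < (2+y)^2 := by nlinarith
      apply div_nonneg (sq_nonneg _)
      positivity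
  have h0 : f 0 = 0 := by simp [hf]
  have := hmono (le_refl (0:ℝ)) hx hx
  rw [h0] at this
  simpa [hf] using this

private lemma log_ub_aux {x : ℝ} (hx : 0 ≤ x) : Real.log (1+x) ≤ x*(x+6)/(4*x+6) := by
  set f : ℝ → ℝ := fun t => t*(t+6)/(4*t+6) - Real.log (1+t) with hf
  have hder : ∀ y : ℝ, 0 ≤ y → HasDerivAt f (4*y^3/((4*y+6)^2*(1+y))) y := by
    intro y hy
    have h1y : (1:ℝ) + y ≠ 0 := by linarith
    have h2y : (4:ℝ)*y + 6 ≠ 0 := by linarith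
    have h1 : HasDerivAt (fun t : ℝ => Real.log (1+t)) (1/(1+y)) y := by
      have := (Real.hasDerivAt_log h1y).comp y ((hasDerivAt_id y).const_add 1)
      simpa [one_div, Function.comp_def] using this
    have h2 : HasDerivAt (fun t : ℝ => t*(t+6)/(4*t+6))
        ((4*y^2+12*y+36)/(4*y+6)^2) y := by
      have hnum : HasDerivAt (fun t : ℝ => t*(t+6)) (2*y+6) y := by
        have := ((hasDerivAt_id y).mul ((hasDerivAt_id y).add_const 6))
        refine this.congr_deriv ?_
        simp only [id_eq]
        ring
      have hden : HasDerivAt (fun t : ℝ => 4*t+6) 4 y := by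
        have := ((hasDerivAt_id y).const_mul 4).add_const 6
        simpa using this
      have := hnum.div hden h2y
      refine this.congr_deriv ?_
      field_simp
      ring
    have := h2.sub h1
    refine this.congr_deriv ?_
    field_simp
    ring
  have hmono : MonotoneOn f (Set.Ici 0) := by
    apply monotoneOn_of_deriv_nonneg (convex_Ici 0)
    · exact fun y hy => ((hder y hy).continuousAt).continuousWithinAt
    · intro y hy
      rw [interior_Ici] at hy
      exact (hder y (le_of_lt hy)).differentiableAt.differentiableWithinAt
    · intro y hy
      rw [interior_Ici] at hy
      rw [(hder y (le_of_lt hy)).deriv]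
      have hy' : (0:ℝ) < y := hy
      have h1y : (0:ℝ) < 1+y := by linarith
      have h2y : (0:ℝ) < (4*y+6)^2 := by nlinarith
      have h3y : (0:ℝ) ≤ 4*y^3 := by nlinarith [mul_nonneg (mul_nonneg hy'.le hy'.le) hy'.le]
      apply div_nonneg h3y
      positivity
  have h0 : f 0 = 0 := by simp [hf]
  have := hmono (le_refl (0:ℝ)) hx hx
  rw [h0] at this
  simpa [hf] using this

theorem rpow_exp_two_sided_bound (n : ℕ) (hn : 0 < n) (α : ℝ) (hα0 : 0 ≤ α) (hα1 : α ≤ 1) :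
    Real.exp (-α - α * (1 - α) / (4 * n) - 1 / (16 * n)) ≤
      ((n : ℝ) / ((n : ℝ) + α)) ^ ((n : ℝ) + 1 / 2) ∧
    ((n : ℝ) / ((n : ℝ) + α)) ^ ((n : ℝ) + 1 / 2) ≤
      Real.exp (-α - α * (1 - α) / (4 * n)) := by
  have hn' : (0:ℝ) < n := by exact_mod_cast hn
  have hn1 : (1:ℝ) ≤ n := by exact_mod_cast hn
  set x : ℝ := α / n with hxdef
  have hx0 : 0 ≤ x := by positivity
  have hnx : (n:ℝ) * x = α := by rw [hxdef]; field_simp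
  have hxα : x ≤ α := by
    rw [hxdef]
    exact div_le_self hα0 hn1
  have hx1 : x ≤ 1 := le_trans hxα hα1
  have hbase : (0:ℝ) < (n:ℝ)/((n:ℝ)+α) := by positivity
  have hrw : ((n:ℝ)/((n:ℝ)+α)) ^ ((n:ℝ)+1/2)
      = Real.exp (-(((n:ℝ)+1/2) * Real.log (1+x))) := by
    rw [Real.rpow_def_of_pos hbase]
    congr 1
    have hlg : Real.log ((n:ℝ)/((n:ℝ)+α)) = -Real.log (1+x) := by
      rw [← Real.log_inv]
      congr 1
      rw [hxdef]
      field_simp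
    rw [hlg]
    ring
  constructor
  · -- lower bound: need (n+1/2) log(1+x) ≤ α + α(1-α)/(4n) + 1/(16n)
    rw [hrw, Real.exp_le_exp]
    have hlog := log_ub_aux hx0
    have h46 : (0:ℝ) < 4*x+6 := by linarith
    have step1 : ((n:ℝ)+1/2) * Real.log (1+x) ≤ ((n:ℝ)+1/2) * (x*(x+6)/(4*x+6)) := by
      apply mul_le_mul_of_nonneg_left hlog
      positivity
    have hNnn : 0 ≤ 12*α^2 - 8*α^2*x + 4*α*x - 12*α + 2*x + 3 := by
      nlinarith [sq_nonneg (2*α-1), mul_nonneg (sub_nonneg.2 hα1) (sq_nonneg (2*α-1)),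
        mul_nonneg hx0 (sub_nonneg.2 hxα), sq_nonneg α, mul_nonneg hα0 hx0,
        mul_nonneg (mul_nonneg hα0 hα0) hx0]
    have hid : α + α*(1-α)/(4*(n:ℝ)) + 1/(16*(n:ℝ)) - ((n:ℝ)+1/2) * (x*(x+6)/(4*x+6))
        = (12*α^2 - 8*α^2*x + 4*α*x - 12*α + 2*x + 3) / (8*(n:ℝ)*(4*x+6)) := by
      rw [← hnx]
      field_simp
      ring
    have step2 : ((n:ℝ)+1/2) * (x*(x+6)/(4*x+6)) ≤ α + α*(1-α)/(4*(n:ℝ)) + 1/(16*(n:ℝ)) := by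
      nlinarith [div_nonneg hNnn (by positivity : (0:ℝ) ≤ 8*(n:ℝ)*(4*x+6))]
    linarith
  · -- upper bound: need α + α(1-α)/(4n) ≤ (n+1/2) log(1+x)
    rw [hrw, Real.exp_le_exp]
    have hlog := log_lb_aux hx0
    have h2x : (0:ℝ) < 2+x := by linarith
    have step1 : ((n:ℝ)+1/2) * (2*x/(2+x)) ≤ ((n:ℝ)+1/2) * Real.log (1+x) := by
      apply mul_le_mul_of_nonneg_left hlog
      positivity
    have hNnn : 0 ≤ α*(1-α)*(2-x) := by
      apply mul_nonneg (mul_nonneg hα0 (by linarith))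
      linarith
    have hid : ((n:ℝ)+1/2) * (2*x/(2+x)) - (α + α*(1-α)/(4*(n:ℝ)))
        = α*(1-α)*(2-x) / (4*(n:ℝ)*(2+x)) := by
      rw [← hnx]
      field_simp
      ring
    have step2 : α + α*(1-α)/(4*(n:ℝ)) ≤ ((n:ℝ)+1/2) * (2*x/(2+x)) := by
      nlinarith [div_nonneg hNnn (by positivity : (0:ℝ) ≤ 4*(n:ℝ)*(2+x))]
    linarith
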